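/- Let n ≥ 1 and let y ∈ ℝⁿ. Suppose y⁺ ∈ K_n satisfies ‖y − y⁺‖ ≤ ‖y − w‖ for every w ∈ K_n (i.e. y⁺ is the isotonic projection of y). Then the first coordinate satisfies y₁ ≤ (y⁺)₁; that is, the top coordinate can only increase under isotonic projection onto the monotone cone. -/

import Mathlib

noncomputable section

/-- The monotone (isotonic) cone of nonincreasing vectors in `ℝⁿ`. -/
def monoCone (n : ℕ) : Set (EuclideanSpace ℝ (Fin n)) :=
  {x | ∀ i j : Fin n, i ≤ j → x j ≤ x i}

/-- `p` is an isotonic projection of `y` onto the monotone cone. -/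
def IsIsoProj {n : ℕ} (y p : EuclideanSpace ℝ (Fin n)) : Prop :=
  p ∈ monoCone n ∧ ∀ w ∈ monoCone n, ‖y - p‖ ≤ ‖y - w‖

/-- The top coordinate can only increase under isotonic projection onto the
monotone cone. -/
theorem top_coordinate_increases_under_isotonic_projection
    {n : ℕ} (hn : 0 < n) (y p : EuclideanSpace ℝ (Fin n))
    (hp : IsIsoProj y p) :
    y ⟨0, hn⟩ ≤ p ⟨0, hn⟩ := by
  by_contra h
  push_neg at h
  set i : Fin n := ⟨0, hn⟩ with hi
  set t : ℝ := y i - p i with htdef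
  have ht : 0 < t := by simp [htdef]; linarith
  set w : EuclideanSpace ℝ (Fin n) := p + EuclideanSpace.single i t with hw
  have hwmem : w ∈ monoCone n := by
    intro j k hjk
    have hij : i ≤ j := Fin.mk_le_of_le_val (Nat.zero_le _)
    have hik : i ≤ k := Fin.mk_le_of_le_val (Nat.zero_le _)
    have hpk : p k ≤ p j := hp.1 j k hjk
    simp only [hw, PiLp.add_apply, EuclideanSpace.single_apply]
    by_cases hji : j = i
    · subst hji
      by_cases hki : k = i
      · subst hki; simp
      · simp [hki]; linarith
    · have hki : ¬ k = i := by
        intro e; subst e; exact hji (le_antisymm hjk hij)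
      simp [hji, hki]; linarith
  have hle := hp.2 w hwmem
  have key : ‖y - w‖ ^ 2 = ‖y - p‖ ^ 2 - t ^ 2 := by
    have hyw : y - w = (y - p) - EuclideanSpace.single i t := by
      simp [hw]; abel
    rw [hyw, norm_sub_sq_real]
    have hinner : inner ℝ (y - p) (EuclideanSpace.single i t) = t * t := by
      rw [EuclideanSpace.inner_single_right]
      simp [htdef]
    rw [hinner, EuclideanSpace.norm_single]
    have : ‖t‖ = t := by rw [Real.norm_eq_abs, abs_of_pos ht]
    rw [this]; ring
  have hsq : ‖y - p‖ ^ 2 ≤ ‖y - w‖ ^ 2 :=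
    pow_le_pow_left₀ (norm_nonneg _) hle 2
  nlinarith
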